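/- Let H be a Hilbert space with a continuous bilinear form b : H × Q → ℝ on Hilbert spaces H, Q satisfying the inf-sup condition sup_{v ≠ 0} |b(v,q)|/‖v‖ ≥ β‖q‖ for all q ∈ Q with β > 0. If x ∈ H satisfies b(x,q) = 0 for all q ∈ Q and F : H → ℝ is a bounded linear functional vanishing on the kernel X = {v ∈ H : b(v,q) = 0 ∀q ∈ Q}, then there exists a unique p ∈ Q such that F(v) = b(v,p) for all v ∈ H. -/

import Mathlib

open InnerProductSpace


/-- Pressure recovery: if a bounded linear functional vanishes on the kernel of an
inf-sup stable bilinear form `b`, it is represented by a unique Lagrange multiplier. -/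
theorem stmt1 {H Q : Type*} [NormedAddCommGroup H] [InnerProductSpace ℝ H] [CompleteSpace H]
    [NormedAddCommGroup Q] [InnerProductSpace ℝ Q] [CompleteSpace Q]
    (b : H → Q → ℝ)
    (hb1 : ∀ v : H, IsLinearMap ℝ (fun q => b v q))
    (hb2 : ∀ q : Q, IsLinearMap ℝ (fun v => b v q))
    (M : ℝ) (hbound : ∀ (v : H) (q : Q), |b v q| ≤ M * ‖v‖ * ‖q‖)
    (β : ℝ) (hβ : 0 < β)
    (hinfsup : ∀ q : Q, β * ‖q‖ ≤ ⨆ v : H, |b v q| / ‖v‖)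
    (x : H) (hx : ∀ q : Q, b x q = 0)
    (F : H →L[ℝ] ℝ)
    (hF : ∀ v : H, (∀ q : Q, b v q = 0) → F v = 0) :
    ∃! p : Q, ∀ v : H, F v = b v p := by
  -- continuous linear functional v ↦ b v q
  have hbound' : ∀ (v : H) (q : Q), |b v q| ≤ |M| * ‖q‖ * ‖v‖ := by
    intro v q
    calc |b v q| ≤ M * ‖v‖ * ‖q‖ := hbound v q
    _ ≤ |M| * ‖v‖ * ‖q‖ := by
        gcongr ?_ * ‖v‖ * ‖q‖; exact le_abs_self M
    _ = |M| * ‖q‖ * ‖v‖ := by ring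
  set φ : Q → (H →L[ℝ] ℝ) := fun q =>
    LinearMap.mkContinuous (IsLinearMap.mk' _ (hb2 q)) (|M| * ‖q‖)
      (fun v => by simpa [Real.norm_eq_abs] using hbound' v q) with hφ
  have hφ_apply : ∀ q v, φ q v = b v q := fun q v => rfl
  -- A q : Riesz representative
  set A : Q → H := fun q => (toDual ℝ H).symm (φ q) with hA
  have hAinner : ∀ q v, ⟪A q, v⟫_ℝ = b v q := fun q v => toDual_symm_apply
  have hAadd : ∀ q1 q2, A (q1 + q2) = A q1 + A q2 := by
    intro q1 q2
    apply ext_inner_right ℝ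
    intro v
    simp [hAinner, inner_add_left, (hb1 v).map_add]
  have hAsmul : ∀ (c : ℝ) q, A (c • q) = c • A q := by
    intro c q
    apply ext_inner_right ℝ
    intro v
    simp [hAinner, inner_smul_left, (hb1 v).map_smul]
  set A' : Q →L[ℝ] H := LinearMap.mkContinuous
    { toFun := A, map_add' := hAadd, map_smul' := hAsmul } (|M|)
    (fun q => by
      have : ‖φ q‖ ≤ |M| * ‖q‖ :=
        LinearMap.mkContinuous_norm_le _ (by positivity) _
      simpa [hA, mul_comm] using this) with hA'
  have hA'inner : ∀ q v, ⟪A' q, v⟫_ℝ = b v q := fun q v => hAinner q v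
  -- lower bound
  have hlow : ∀ q, β * ‖q‖ ≤ ‖A' q‖ := by
    intro q
    refine le_trans (hinfsup q) (ciSup_le fun v => ?_)
    rcases eq_or_ne v 0 with rfl | hv
    · simp [(hb2 q).map_zero]
    · rw [div_le_iff₀ (norm_pos_iff.2 hv)]
      calc |b v q| = ‖⟪A' q, v⟫_ℝ‖ := by rw [hA'inner]; exact (Real.norm_eq_abs _).symm
      _ ≤ ‖A' q‖ * ‖v‖ := norm_inner_le_norm _ _
  have hanti : AntilipschitzWith (⟨β⁻¹, by positivity⟩ : NNReal) A' := by
    apply ContinuousLinearMap.antilipschitz_of_bound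
    intro q
    have h := hlow q
    show ‖q‖ ≤ β⁻¹ * ‖A' q‖
    rw [← le_div_iff₀' hβ] at h
    simpa [div_eq_inv_mul] using h
  have hinj : Function.Injective A' := hanti.injective
  have hclosed : IsClosed (Set.range A') := hanti.isClosed_range A'.uniformContinuous
  set S : Submodule ℝ H := LinearMap.range (A' : Q →ₗ[ℝ] H) with hS
  have hScoe : (S : Set H) = Set.range A' := by
    ext w; simp [hS]
  haveI : CompleteSpace S := IsClosed.completeSpace_coe (hs := by rw [hScoe]; exact hclosed)
  -- Riesz representative of F
  set f : H := (toDual ℝ H).symm F with hf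
  have hfinner : ∀ v, ⟪f, v⟫_ℝ = F v := fun v => toDual_symm_apply
  have hfS : f ∈ S := by
    rw [← Submodule.orthogonal_orthogonal S]
    intro w hw
    have hwb : ∀ q, b w q = 0 := by
      intro q
      have := hw (A' q) (LinearMap.mem_range_self _ q)
      rw [← hA'inner q w]; exact this
    have : ⟪f, w⟫_ℝ = 0 := by rw [hfinner]; exact hF w hwb
    simpa [real_inner_comm] using this
  obtain ⟨p, hp⟩ := hfS
  refine ⟨p, fun v => ?_, fun p' hp' => ?_⟩
  · rw [← hfinner v, ← hp]
    exact hA'inner p v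
  · apply hinj
    apply ext_inner_right ℝ
    intro v
    rw [hA'inner, hA'inner, ← hp' v, ← hfinner v, ← hp]
    exact hA'inner p v
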